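/- Let k_o > 0, let α : ℝ → ℝ be continuous and bounded, and let d : ℝ → ℝ be twice differentiable with d(0) > 0 and d(t) > 0 for all t ≥ 0, satisfying d''(t) = −k_o·d'(t)/d(t) − α(t) for all t ≥ 0. If ∫₀ᵗ α(τ) dτ → +∞ as t → ∞, then d(t) → 0 as t → ∞. -/

import Mathlib

open Filter

/-- Backward implication of item 2 of Lemma 1: if the integral of `α`
diverges to `+∞`, then the distance `d` governed by the barrier ODE
`d'' = -k_o * d'/d - α` (with `d > 0` on `[0, ∞)`) converges to zero. -/
theorem barrier_integral_infinite_implies_tendsto_zero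
    (k_o : ℝ) (hk : 0 < k_o) (α d : ℝ → ℝ)
    (hα_cont : Continuous α) (hα_bdd : ∃ M, ∀ t, |α t| ≤ M)
    (hd1 : Differentiable ℝ d) (hd2 : Differentiable ℝ (deriv d))
    (hd0 : 0 < d 0) (hdpos : ∀ t ≥ (0:ℝ), 0 < d t)
    (hode : ∀ t ≥ (0:ℝ),
      deriv (deriv d) t = -k_o * deriv d t / d t - α t)
    (hint : Tendsto (fun t => ∫ τ in (0:ℝ)..t, α τ) atTop atTop) :
    Tendsto d atTop (nhds 0) := by
  set A : ℝ → ℝ := fun t => ∫ τ in (0:ℝ)..t, α τ with hA_def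
  set φ : ℝ → ℝ := fun s => deriv d s + k_o * Real.log (d s) + A s with hφ_def
  set C : ℝ := deriv d 0 + k_o * Real.log (d 0) with hC_def
  -- derivative of the integral
  have hA : ∀ x : ℝ, HasDerivAt A (α x) x := fun x =>
    intervalIntegral.integral_hasDerivAt_right (hα_cont.intervalIntegrable _ _)
      (hα_cont.stronglyMeasurableAtFilter _ _) hα_cont.continuousAt
  -- φ has derivative 0 at every x ≥ 0
  have hφ : ∀ x ≥ (0:ℝ), HasDerivAt φ 0 x := by
    intro x hx
    have h1 : HasDerivAt (deriv d) (deriv (deriv d) x) x := (hd2 x).hasDerivAt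
    have h2 : HasDerivAt (fun s => Real.log (d s)) (deriv d x / d x) x :=
      (hd1 x).hasDerivAt.log (ne_of_gt (hdpos x hx))
    have h := (h1.add (h2.const_mul k_o)).add (hA x)
    have hval : deriv (deriv d) x + k_o * (deriv d x / d x) + α x = 0 := by
      rw [hode x hx]; ring
    rw [hval] at h
    exact h
  -- the conserved quantity
  have key : ∀ t ≥ (0:ℝ), deriv d t + k_o * Real.log (d t) + A t = C := by
    intro t ht
    have hφ0 : φ 0 = C := by
      simp [hφ_def, hA_def, hC_def, intervalIntegral.integral_same]
    rcases eq_or_lt_of_le ht with h | h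
    · rw [← h]; simpa [hφ_def] using hφ0
    · have hcont : ContinuousOn φ (Set.Icc 0 t) := fun x hx =>
        (hφ x hx.1).continuousAt.continuousWithinAt
      have hder : ∀ x ∈ Set.Ico (0:ℝ) t, HasDerivWithinAt φ 0 (Set.Ici x) x :=
        fun x hx => (hφ x hx.1).hasDerivWithinAt
      have := constant_of_has_deriv_right_zero hcont hder t (Set.right_mem_Icc.2 ht)
      rw [hφ0] at this
      simpa [hφ_def] using this
  -- main argument
  rw [Metric.tendsto_atTop]
  intro ε hε
  set δ : ℝ := ε / 2 with hδ_def
  have hδpos : 0 < δ := by positivity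
  have hδε : δ < ε := by simp [hδ_def]; linarith
  -- T: beyond which A is large
  obtain ⟨T₀, hT₀⟩ := (hint.eventually_ge_atTop (C - k_o * Real.log δ + 1)).exists_forall_of_atTop
  set T : ℝ := max T₀ 0 with hT_def
  have hT0 : (0:ℝ) ≤ T := le_max_right _ _
  -- (*) : beyond T, if d ≥ δ then deriv d ≤ -1
  have star : ∀ t ≥ T, δ ≤ d t → deriv d t ≤ -1 := by
    intro t ht hdt
    have ht0 : (0:ℝ) ≤ t := le_trans hT0 ht
    have hAt : C - k_o * Real.log δ + 1 ≤ A t := hT₀ t (le_trans (le_max_left _ _) ht)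
    have hlog : Real.log δ ≤ Real.log (d t) := Real.log_le_log hδpos hdt
    have hml : k_o * Real.log δ ≤ k_o * Real.log (d t) :=
      mul_le_mul_of_nonneg_left hlog hk.le
    have := key t ht0
    linarith
  -- existence of t₀ ≥ T with d t₀ < δ
  have hex : ∃ t₀ ≥ T, d t₀ < δ := by
    by_contra hcon
    push_neg at hcon
    set X : ℝ := T + d T + 1 with hX_def
    have hTX : T ≤ X := by
      have := hdpos T hT0; simp [hX_def]; linarith
    have hanti : AntitoneOn (fun s => d s + s) (Set.Icc T X) := by
      apply antitoneOn_of_deriv_nonpos (convex_Icc T X)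
      · exact ((hd1.continuous.add continuous_id).continuousOn)
      · intro x _
        exact ((hd1 x).add (differentiableAt_id)).differentiableWithinAt
      · intro x hx
        rw [interior_Icc] at hx
        have hder : deriv (fun s => d s + s) x = deriv d x + 1 :=
          ((hd1 x).hasDerivAt.add (hasDerivAt_id x)).deriv
        rw [hder]
        have := star x hx.1.le (hcon x hx.1.le)
        linarith
    have := hanti (Set.left_mem_Icc.2 hTX) (Set.right_mem_Icc.2 hTX) hTX
    have hXpos := hdpos X (le_trans hT0 hTX)
    simp only [hX_def] at this
    linarith
  obtain ⟨t₀, ht₀T, ht₀⟩ := hex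
  -- persistence : ∀ t ≥ t₀, d t < ε
  refine ⟨t₀, fun t₁ ht₁ => ?_⟩
  have hlt : d t₁ < ε := by
    by_contra hcon
    push_neg at hcon
    have ht01 : t₀ < t₁ := by
      rcases eq_or_lt_of_le ht₁ with h | h
      · rw [← h] at hcon; linarith
      · exact h
    set S : Set ℝ := {s ∈ Set.Icc t₀ t₁ | d s ≤ δ} with hS_def
    have hSne : S.Nonempty := ⟨t₀, ⟨Set.left_mem_Icc.2 ht₁, ht₀.le⟩⟩
    have hSbdd : BddAbove S := BddAbove.mono (fun s hs => hs.1) (bddAbove_Icc)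
    have hSclosed : IsClosed S := by
      have : S = Set.Icc t₀ t₁ ∩ d ⁻¹' Set.Iic δ := by
        ext s; simp [hS_def, Set.mem_setOf_eq, and_comm]
      rw [this]
      exact isClosed_Icc.inter (isClosed_Iic.preimage hd1.continuous)
    set τ : ℝ := sSup S with hτ_def
    have hτS : τ ∈ S := hSclosed.csSup_mem hSne hSbdd
    have hτIcc : τ ∈ Set.Icc t₀ t₁ := hτS.1
    have hdτ : d τ ≤ δ := hτS.2
    have hττ1 : τ < t₁ := by
      rcases eq_or_lt_of_le hτIcc.2 with h | h
      · rw [h] at hdτ; linarith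
      · exact h
    have hmid : ∀ s ∈ Set.Ioo τ t₁, δ < d s := by
      intro s hs
      by_contra hds
      push_neg at hds
      have : s ∈ S := ⟨⟨le_trans hτIcc.1 hs.1.le, hs.2.le⟩, hds⟩
      exact absurd (le_csSup hSbdd this) (not_le.2 hs.1)
    have hanti : StrictAntiOn d (Set.Icc τ t₁) := by
      apply strictAntiOn_of_deriv_neg (convex_Icc τ t₁) hd1.continuous.continuousOn
      intro x hx
      rw [interior_Icc] at hx
      have hxT : T ≤ x := le_trans ht₀T (le_trans hτIcc.1 hx.1.le)
      have := star x hxT (hmid x hx).le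
      linarith
    have := hanti (Set.left_mem_Icc.2 hττ1.le) (Set.right_mem_Icc.2 hττ1.le) hττ1
    linarith
  have hpos := hdpos t₁ (le_trans hT0 (le_trans ht₀T ht₁))
  rw [Real.dist_eq]
  rw [abs_sub_lt_iff]
  constructor <;> linarith
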